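/- Let G be a partially directed graph on a finite vertex set V that is strictly acyclic and satisfies: whenever I→J is a directed edge and J—K is an undirected edge, the vertices I and K are adjacent (an SA-MPDAG-like graph). Let X and Y be disjoint vertex subsets such that G has no proper semi-directed path from X to Y that starts with an undirected edge. Let p be a strictly positive pmf on ∏_{i∈V}𝒳_i (each 𝒳_i finite nonempty) that factorizes according to every DAG in [G], and assume [G] ≠ ∅. Then for every DAG D ∈ [G] and every choice of intervened values x for X and values y for Y, the Y-marginal of the truncated factorization, Σ_{v_{V∖(X∪Y)}} ∏_{i∈V∖X} p(v_i | v_{Pa_D(i)}) (with X-coordinates fixed at x and Y-coordinates at y), is the same for all D ∈ [G], and equals Σ_b ∏_{j=1}^{k} p(b_j | pa_G(B_j)), where B = An_{G_{V∖X}}(Y)∖Y, {B_1,…,B_k} = CD_G(An_{G_{V∖X}}(Y)), the sum is over configurations b of B, and all parent values lying in X are set to agree with x. -/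

import Mathlib

open scoped Classical

/-- A partially directed graph on vertex type `V`: directed edges `dir i j` (i→j) and
undirected edges `undir i j` (i—j), with at most one edge between any two vertices. -/
structure PDG (V : Type) where
  dir : V → V → Prop
  undir : V → V → Prop
  undir_symm : ∀ i j, undir i j → undir j i
  undir_irrefl : ∀ i, ¬ undir i i
  dir_irrefl : ∀ i, ¬ dir i i
  not_dir_dir : ∀ i j, dir i j → ¬ dir j i
  not_dir_undir : ∀ i j, dir i j → ¬ undir i j

namespace PDG

variable {V : Type}

/-- Adjacency: joined by some edge. -/
def Adj (G : PDG V) (i j : V) : Prop := G.dir i j ∨ G.dir j i ∨ G.undir i j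

/-- A semi-directed step from `i` to `j`: an undirected edge or a directed edge `i→j`. -/
def SStep (G : PDG V) (i j : V) : Prop := G.dir i j ∨ G.undir i j

/-- Existence of a semi-directed cycle: `f 0, …, f m` with `f 0 = f m`, `m ≥ 2`,
each consecutive pair a semi-directed step, at least one step directed. -/
def HasSemiDirectedCycle (G : PDG V) : Prop :=
  ∃ (m : ℕ) (f : ℕ → V), 2 ≤ m ∧ f 0 = f m ∧
    (∀ i < m, G.SStep (f i) (f (i + 1))) ∧ (∃ i < m, G.dir (f i) (f (i + 1)))

/-- Strictly acyclic: no semi-directed cycle. -/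
def StrictlyAcyclic (G : PDG V) : Prop := ¬ G.HasSemiDirectedCycle

/-- Joined by a path of undirected edges (possibly trivial). -/
def sameChain (G : PDG V) (i j : V) : Prop := Relation.ReflTransGen G.undir i j

/-- The chain component of a vertex. -/
def chainComp (G : PDG V) (i : V) : Set V := {j | G.sameChain i j}

/-- Parents of a vertex set. -/
def Pa (G : PDG V) (D : Set V) : Set V := {i | ∃ d ∈ D, G.dir i d}

/-- Ancestors of a vertex set (directed path, possibly of length 0). -/
def An (G : PDG V) (D : Set V) : Set V := {i | ∃ d ∈ D, Relation.ReflTransGen G.dir i d}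

/-- A DAG: only directed edges, and no directed cycles. -/
def IsDAG (G : PDG V) : Prop :=
  (∀ i j, ¬ G.undir i j) ∧ ∀ i, ¬ Relation.TransGen G.dir i i

/-- Unshielded collider `(i, k, j)`: `i→k ← j` with `i`, `j` distinct and non-adjacent. -/
def UC (G : PDG V) (i k j : V) : Prop :=
  i ≠ j ∧ G.dir i k ∧ G.dir j k ∧ ¬ G.Adj i j

/-- `D ∈ [G]`: `D` is a DAG with the same skeleton as `G`, containing every directed edge
of `G`, all of whose unshielded colliders are unshielded colliders of `G`. -/
def InClass (D G : PDG V) : Prop :=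
  D.IsDAG ∧ (∀ i j, D.Adj i j ↔ G.Adj i j) ∧ (∀ i j, G.dir i j → D.dir i j) ∧
    (∀ i k j, D.UC i k j → G.UC i k j)

/-- `C` is a nonempty set, connected by undirected edges within `C`, receiving a directed
edge from `I` and one from `J`. -/
def ComplexCand (G : PDG V) (I : V) (C : Set V) (J : V) : Prop :=
  C.Nonempty ∧
  (∀ a ∈ C, ∀ b ∈ C,
    Relation.ReflTransGen (fun x y => G.undir x y ∧ x ∈ C ∧ y ∈ C) a b) ∧
  (∃ c ∈ C, G.dir I c) ∧ (∃ c ∈ C, G.dir J c)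

/-- Minimal complex `(I, C, J)` of `G`. -/
def MinimalComplex (G : PDG V) (I : V) (C : Set V) (J : V) : Prop :=
  I ≠ J ∧ ¬ G.Adj I J ∧ (∀ a ∈ C, ∀ b ∈ C, G.sameChain a b) ∧
  G.ComplexCand I C J ∧ ∀ C' ⊂ C, ¬ G.ComplexCand I C' J

/-- Remove all directed edges pointing into `S`. -/
def removeInto (G : PDG V) (S : Set V) : PDG V where
  dir i j := G.dir i j ∧ j ∉ S
  undir := G.undir
  undir_symm := G.undir_symm
  undir_irrefl := G.undir_irrefl
  dir_irrefl i h := G.dir_irrefl i h.1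
  not_dir_dir i j h h' := G.not_dir_dir i j h.1 h'.1
  not_dir_undir i j h h' := G.not_dir_undir i j h.1 h'

/-- Induced subgraph on the vertex set `D` (kept on the same vertex type; edges
outside `D` are discarded). -/
def induce (G : PDG V) (D : Set V) : PDG V where
  dir i j := G.dir i j ∧ i ∈ D ∧ j ∈ D
  undir i j := G.undir i j ∧ i ∈ D ∧ j ∈ D
  undir_symm i j h := ⟨G.undir_symm i j h.1, h.2.2, h.2.1⟩
  undir_irrefl i h := G.undir_irrefl i h.1
  dir_irrefl i h := G.dir_irrefl i h.1
  not_dir_dir i j h h' := G.not_dir_dir i j h.1 h'.1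
  not_dir_undir i j h h' := G.not_dir_undir i j h.1 h'.1

/-- `G(↛X)`: `G` with every directed edge into `X ∩ An_G(Y)` removed. -/
def noInto (G : PDG V) (X Y : Set V) : PDG V := G.removeInto (X ∩ G.An Y)

/-- `RM(G; X, Y)`: the induced subgraph of `G(↛X)` on `An_{G(↛X)}(Y)`. -/
def RM (G : PDG V) (X Y : Set V) : PDG V :=
  (G.noInto X Y).induce ((G.noInto X Y).An Y)

/-- There is a proper semi-directed path from `X` to `Y` starting with an undirected
edge: distinct vertices `f 0 ∈ X, …, f m ∈ Y`, only `f 0` in `X`, each consecutive pair a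
semi-directed step, the first edge undirected. -/
def HasProperUndirStartPath (G : PDG V) (X Y : Set V) : Prop :=
  ∃ (m : ℕ) (f : ℕ → V), 1 ≤ m ∧
    (∀ i ≤ m, ∀ j ≤ m, f i = f j → i = j) ∧
    f 0 ∈ X ∧ f m ∈ Y ∧ (∀ i < m, G.SStep (f i) (f (i + 1))) ∧
    (∀ i, 1 ≤ i → i ≤ m → f i ∉ X) ∧ G.undir (f 0) (f 1)

/-- Membership in the chain decomposition `CD_G(D)`: the nonempty intersections of `D`
with chain components of `G`. -/
def CDmem (G : PDG V) (D S : Set V) : Prop :=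
  S.Nonempty ∧ ∃ i, S = D ∩ G.chainComp i

end PDG

noncomputable section Prob

open PDG

variable {V : Type} [Fintype V] [DecidableEq V] {𝒳 : V → Type} [∀ i, Fintype (𝒳 i)]
  [∀ i, Nonempty (𝒳 i)]

/-- Marginal `p_S(v_S)`: sum of `p` over configurations agreeing with `v` on `S`. -/
def marginal (p : (∀ i, 𝒳 i) → ℝ) (S : Set V) (v : ∀ i, 𝒳 i) : ℝ :=
  ∑ w : ∀ i, 𝒳 i, if ∀ i ∈ S, w i = v i then p w else 0

/-- Conditional `p(v_A | v_S) = p_{A∪S}(v_{A∪S}) / p_S(v_S)`. -/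
def condP (p : (∀ i, 𝒳 i) → ℝ) (A S : Set V) (v : ∀ i, 𝒳 i) : ℝ :=
  marginal p (A ∪ S) v / marginal p S v

/-- A strictly positive pmf. -/
def IsPositivePMF (p : (∀ i, 𝒳 i) → ℝ) : Prop :=
  (∀ v, 0 < p v) ∧ ∑ v : ∀ i, 𝒳 i, p v = 1

/-- `p` factorizes according to the DAG `D`. -/
def FactorizesDAG (p : (∀ i, 𝒳 i) → ℝ) (D : PDG V) : Prop :=
  ∀ v, p v = ∏ i : V, condP p {i} (D.Pa {i}) v

/-- The (finitely many) chain components of `G`. -/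
def chainComponents (G : PDG V) : Finset (Set V) :=
  Finset.univ.image (fun i => G.chainComp i)

/-- The outer chain-graph factorization `∏_τ p(v_τ | v_{Pa_G(τ)})` over chain
components `τ` of `G`. -/
def chainProd (G : PDG V) (p : (∀ i, 𝒳 i) → ℝ) (v : ∀ i, 𝒳 i) : ℝ :=
  ∏ τ ∈ chainComponents G, condP p τ (G.Pa τ) v

/-- The product `∏_j p(v_{D_j} | v_{Pa_G(D_j)})` over the chain decomposition
`CD_G(D) = {D_1,…,D_k}` (empty intersections contribute a factor `1`). -/
def cdProd (G : PDG V) (p : (∀ i, 𝒳 i) → ℝ) (D : Set V) (v : ∀ i, 𝒳 i) : ℝ :=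
  ∏ τ ∈ chainComponents G, condP p (D ∩ τ) (G.Pa (D ∩ τ)) v

/-- The identification formula (g-formula) of Perković's theorem:
`Σ_b ∏_j p(b_j | pa_G(B_j))` where `{B_1,…,B_k} = CD_G(An_{G_{V∖X}}(Y))`,
the sum running over configurations of `B = An_{G_{V∖X}}(Y) ∖ Y`, all other
coordinates (in particular the intervened values on `X` and the values on `Y`)
being fixed by `v`. -/
def gFormula (G : PDG V) (p : (∀ i, 𝒳 i) → ℝ) (X Y : Set V) (v : ∀ i, 𝒳 i) : ℝ :=
  ∑ w : ∀ i, 𝒳 i,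
    if ∀ i, i ∉ (G.induce Xᶜ).An Y \ Y → w i = v i then
      cdProd G p ((G.induce Xᶜ).An Y) w
    else 0

/-- The re-weighting formula `Σ_{v'} p(v) / ∏_j p(x_j | pa_G(X_j))`, where
`{X_1,…,X_m} = CD_G(X ∩ An_G(Y))` and the sum runs over configurations of
`V ∖ (X ∪ Y)`, the coordinates on `X ∪ Y` being fixed by `v`. -/
def rwFormula (G : PDG V) (p : (∀ i, 𝒳 i) → ℝ) (X Y : Set V) (v : ∀ i, 𝒳 i) : ℝ :=
  ∑ w : ∀ i, 𝒳 i,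
    if ∀ i ∈ X ∪ Y, w i = v i then p w / cdProd G p (X ∩ G.An Y) w else 0

/-- The `Y`-marginal of the truncated factorization of `p` with respect to the DAG `D`:
`Σ_{v_{V∖(X∪Y)}} ∏_{i ∈ V∖X} p(v_i | v_{Pa_D(i)})`, the coordinates on `X ∪ Y` being
fixed by `v`. -/
def truncMarg (D : PDG V) (p : (∀ i, 𝒳 i) → ℝ) (X Y : Set V) (v : ∀ i, 𝒳 i) : ℝ :=
  ∑ w : ∀ i, 𝒳 i,
    if ∀ i ∈ X ∪ Y, w i = v i then
      ∏ i ∈ Finset.univ.filter (fun i => i ∉ X), condP p {i} (D.Pa {i}) w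
    else 0

end Prob
section Aux1
set_option linter.unusedSectionVars false

variable {V : Type} [Fintype V] [DecidableEq V] {𝒳 : V → Type} [∀ i, Fintype (𝒳 i)]
  [∀ i, Nonempty (𝒳 i)]

lemma marginal_congr (p : (∀ i, 𝒳 i) → ℝ) {S : Set V} {v v' : ∀ i, 𝒳 i}
    (h : ∀ i ∈ S, v i = v' i) : marginal p S v = marginal p S v' := by
  unfold marginal
  refine Finset.sum_congr rfl fun w _ => ?_
  have : (∀ i ∈ S, w i = v i) ↔ (∀ i ∈ S, w i = v' i) := by
    constructor <;> intro hh i hi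
    · rw [← h i hi]; exact hh i hi
    · rw [h i hi]; exact hh i hi
  exact if_congr this rfl rfl

lemma marginal_pos {p : (∀ i, 𝒳 i) → ℝ} (hp : IsPositivePMF p) (S : Set V) (v : ∀ i, 𝒳 i) :
    0 < marginal p S v := by
  unfold marginal
  refine Finset.sum_pos' (fun w _ => ?_) ⟨v, Finset.mem_univ v, ?_⟩
  · split
    · exact (hp.1 w).le
    · exact le_rfl
  · rw [if_pos (fun i _ => rfl)]
    exact hp.1 v

lemma marginal_empty {p : (∀ i, 𝒳 i) → ℝ} (hp : IsPositivePMF p) (v : ∀ i, 𝒳 i) :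
    marginal p (∅ : Set V) v = 1 := by
  unfold marginal
  rw [← hp.2]
  refine Finset.sum_congr rfl fun w _ => ?_
  rw [if_pos (fun i hi => absurd hi (Set.notMem_empty i))]

lemma condP_congr (p : (∀ i, 𝒳 i) → ℝ) {A S : Set V} {v v' : ∀ i, 𝒳 i}
    (h : ∀ i ∈ A ∪ S, v i = v' i) : condP p A S v = condP p A S v' := by
  unfold condP
  rw [marginal_congr p h, marginal_congr p (fun i hi => h i (Set.mem_union_right A hi))]

lemma condP_empty {p : (∀ i, 𝒳 i) → ℝ} (hp : IsPositivePMF p) (S : Set V) (v : ∀ i, 𝒳 i) :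
    condP p (∅ : Set V) S v = 1 := by
  unfold condP
  rw [Set.empty_union, div_self (marginal_pos hp S v).ne']

noncomputable def iteZ (P : Prop) (x : ℝ) : ℝ := @ite ℝ P (Classical.propDecidable P) x 0

lemma iteZ_pos {P : Prop} (h : P) (x : ℝ) : iteZ P x = x := if_pos h

lemma iteZ_neg {P : Prop} (h : ¬ P) (x : ℝ) : iteZ P x = 0 := if_neg h

lemma iteZ_congr {P Q : Prop} {x y : ℝ} (hPQ : P ↔ Q) (hxy : Q → x = y) :
    iteZ P x = iteZ Q y := by
  by_cases h : Q
  · rw [iteZ_pos (hPQ.2 h), iteZ_pos h, hxy h]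
  · rw [iteZ_neg (fun h' => h (hPQ.1 h')), iteZ_neg h]

lemma ite_eq_iteZ {P : Prop} [Decidable P] (x : ℝ) : (if P then x else 0) = iteZ P x := by
  by_cases h : P
  · rw [if_pos h, iteZ_pos h]
  · rw [if_neg h, iteZ_neg h]

lemma sum_iteZ_congr {P Q : (∀ i, 𝒳 i) → Prop} {f g : (∀ i, 𝒳 i) → ℝ}
    (hPQ : ∀ w, P w ↔ Q w) (hfg : ∀ w, Q w → f w = g w) :
    (∑ w : ∀ i, 𝒳 i, iteZ (P w) (f w)) = ∑ w : ∀ i, 𝒳 i, iteZ (Q w) (g w) :=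
  Finset.sum_congr rfl fun w _ => iteZ_congr (hPQ w) (hfg w)

lemma marginal_eq_iteZ (p : (∀ i, 𝒳 i) → ℝ) (S : Set V) (v : ∀ i, 𝒳 i) :
    marginal p S v = ∑ w : ∀ i, 𝒳 i, iteZ (∀ i ∈ S, w i = v i) (p w) :=
  Finset.sum_congr rfl fun w _ => ite_eq_iteZ _

lemma sum_fix_all (g : (∀ i, 𝒳 i) → ℝ) (v : ∀ i, 𝒳 i) :
    (∑ w : ∀ i, 𝒳 i, iteZ (∀ i, w i = v i) (g w)) = g v := by
  rw [Finset.sum_eq_single v]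
  · exact iteZ_pos (fun i => rfl) (g v)
  · intro w _ hw
    exact iteZ_neg (fun h => hw (funext h)) (g w)
  · intro h; exact absurd (Finset.mem_univ v) h

end Aux1
section Aux2
set_option linter.unusedSectionVars false

variable {V : Type} [Fintype V] [DecidableEq V] {𝒳 : V → Type} [∀ i, Fintype (𝒳 i)]
  [∀ i, Nonempty (𝒳 i)]

lemma sum_update_core (u : V) (d : 𝒳 u) (Φ : (∀ i, 𝒳 i) → ℝ) :
    (∑ w : ∀ i, 𝒳 i, Φ w) =
    ∑ w : ∀ i, 𝒳 i, iteZ (w u = d) (∑ c : 𝒳 u, Φ (Function.update w u c)) := by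
  classical
  have hpick : ∀ (b : ℝ) (w : ∀ i, 𝒳 i), (∑ c : 𝒳 u, iteZ (w u = c) b) = b := by
    intro b w
    rw [Finset.sum_eq_single (w u)]
    · exact iteZ_pos rfl b
    · intro c _ hc
      exact iteZ_neg (fun e => hc e.symm) b
    · intro h; exact absurd (Finset.mem_univ _) h
  have h1 : ∀ c : 𝒳 u,
      (∑ w : ∀ i, 𝒳 i, iteZ (w u = d) (Φ (Function.update w u c)))
      = ∑ w : ∀ i, 𝒳 i, iteZ (w u = c) (Φ w) := by
    intro c
    unfold iteZ
    rw [← Finset.sum_filter, ← Finset.sum_filter]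
    refine Finset.sum_nbij' (i := fun w => Function.update w u c)
      (j := fun w => Function.update w u d) ?_ ?_ ?_ ?_ ?_
    · intro w hw
      simp only [Finset.mem_filter, Finset.mem_univ, true_and] at hw ⊢
      exact Function.update_self u c w
    · intro w hw
      simp only [Finset.mem_filter, Finset.mem_univ, true_and] at hw ⊢
      exact Function.update_self u d w
    · intro w hw
      simp only [Finset.mem_filter, Finset.mem_univ, true_and] at hw
      show Function.update (Function.update w u c) u d = w
      rw [Function.update_idem, ← hw, Function.update_eq_self]
    · intro w hw
      simp only [Finset.mem_filter, Finset.mem_univ, true_and] at hw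
      show Function.update (Function.update w u d) u c = w
      rw [Function.update_idem, ← hw, Function.update_eq_self]
    · intro w hw; rfl
  calc (∑ w : ∀ i, 𝒳 i, Φ w)
      = ∑ w : ∀ i, 𝒳 i, ∑ c : 𝒳 u, iteZ (w u = c) (Φ w) := by
        refine Finset.sum_congr rfl fun w _ => ?_
        rw [hpick (Φ w) w]
    _ = ∑ c : 𝒳 u, ∑ w : ∀ i, 𝒳 i, iteZ (w u = c) (Φ w) := Finset.sum_comm
    _ = ∑ c : 𝒳 u, ∑ w : ∀ i, 𝒳 i, iteZ (w u = d) (Φ (Function.update w u c)) := by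
        refine Finset.sum_congr rfl fun c _ => (h1 c).symm
    _ = ∑ w : ∀ i, 𝒳 i, ∑ c : 𝒳 u, iteZ (w u = d) (Φ (Function.update w u c)) :=
        Finset.sum_comm
    _ = ∑ w : ∀ i, 𝒳 i, iteZ (w u = d) (∑ c : 𝒳 u, Φ (Function.update w u c)) := by
        refine Finset.sum_congr rfl fun w _ => ?_
        by_cases h : w u = d
        · rw [iteZ_pos h, Finset.sum_congr rfl fun c _ => iteZ_pos h _]
        · rw [iteZ_neg h, Finset.sum_congr rfl fun c _ => iteZ_neg h _, Finset.sum_const,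
            smul_zero]

lemma sum_free_update {U : Set V} {u : V} (hu : u ∈ U) (v : ∀ i, 𝒳 i)
    (Φ : (∀ i, 𝒳 i) → ℝ) :
    (∑ w : ∀ i, 𝒳 i, iteZ (∀ i, i ∉ U → w i = v i) (Φ w))
    = ∑ w : ∀ i, 𝒳 i, iteZ (∀ i, i ∉ U \ {u} → w i = v i)
        (∑ c : 𝒳 u, Φ (Function.update w u c)) := by
  rw [sum_update_core u (v u) (fun w => iteZ (∀ i, i ∉ U → w i = v i) (Φ w))]
  refine Finset.sum_congr rfl fun w _ => ?_
  have hcongr : ∀ c : 𝒳 u,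
      (∀ i, i ∉ U → Function.update w u c i = v i) ↔ (∀ i, i ∉ U → w i = v i) := by
    intro c; constructor <;> intro h i hi
    · have hne : i ≠ u := fun e => hi (e ▸ hu)
      have := h i hi; rwa [Function.update_of_ne hne] at this
    · have hne : i ≠ u := fun e => hi (e ▸ hu)
      rw [Function.update_of_ne hne]; exact h i hi
  have hsplit : (∀ i, i ∉ U \ {u} → w i = v i) ↔
      ((∀ i, i ∉ U → w i = v i) ∧ w u = v u) := by
    constructor
    · intro h
      exact ⟨fun i hi => h i (fun hm => hi hm.1), h u (fun hm => hm.2 rfl)⟩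
    · rintro ⟨h1, h2⟩ i hi
      by_cases hiu : i = u
      · exact hiu ▸ h2
      · exact h1 i (fun hiU => hi ⟨hiU, hiu⟩)
  by_cases h1 : w u = v u <;> by_cases h2 : ∀ i, i ∉ U → w i = v i
  · rw [iteZ_pos h1, iteZ_pos (hsplit.2 ⟨h2, h1⟩)]
    refine Finset.sum_congr rfl fun c _ => ?_
    rw [iteZ_pos ((hcongr c).2 h2)]
  · rw [iteZ_pos h1, iteZ_neg (fun h => h2 (hsplit.1 h).1)]
    refine Finset.sum_eq_zero fun c _ => ?_
    rw [iteZ_neg (fun h => h2 ((hcongr c).1 h))]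
  · rw [iteZ_neg h1, iteZ_neg (fun h => h1 (hsplit.1 h).2)]
  · rw [iteZ_neg h1, iteZ_neg (fun h => h1 (hsplit.1 h).2)]

lemma sum_update_marginal (p : (∀ i, 𝒳 i) → ℝ) {T : Set V} {u : V} (hu : u ∈ T)
    (v : ∀ i, 𝒳 i) :
    (∑ c : 𝒳 u, marginal p T (Function.update v u c)) = marginal p (T \ {u}) v := by
  rw [Finset.sum_congr rfl fun (c : 𝒳 u) _ => marginal_eq_iteZ p T (Function.update v u c),
    marginal_eq_iteZ p (T \ {u}) v]
  rw [Finset.sum_comm]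
  refine Finset.sum_congr rfl fun w _ => ?_
  have hiff : ∀ c : 𝒳 u, (∀ i ∈ T, w i = Function.update v u c i) ↔
      ((∀ i ∈ T \ {u}, w i = v i) ∧ w u = c) := by
    intro c; constructor
    · intro h
      refine ⟨fun i hi => ?_, ?_⟩
      · have := h i hi.1
        rwa [Function.update_of_ne hi.2] at this
      · have := h u hu
        rwa [Function.update_self] at this
    · rintro ⟨h1, h2⟩ i hi
      by_cases hiu : i = u
      · subst hiu; rw [Function.update_self]; exact h2
      · rw [Function.update_of_ne hiu]; exact h1 i ⟨hi, hiu⟩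
  by_cases hQ : ∀ i ∈ T \ {u}, w i = v i
  · rw [iteZ_pos hQ]
    have hc' : ∀ c : 𝒳 u, iteZ (∀ i ∈ T, w i = Function.update v u c i) (p w)
        = iteZ (w u = c) (p w) := by
      intro c
      by_cases hc : w u = c
      · rw [iteZ_pos ((hiff c).2 ⟨hQ, hc⟩), iteZ_pos hc]
      · rw [iteZ_neg (fun h => hc ((hiff c).1 h).2), iteZ_neg hc]
    rw [Finset.sum_congr rfl fun c _ => hc' c]
    rw [Finset.sum_eq_single (w u)]
    · exact iteZ_pos rfl (p w)
    · intro c _ hc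
      exact iteZ_neg (fun e => hc e.symm) (p w)
    · intro h; exact absurd (Finset.mem_univ _) h
  · rw [iteZ_neg hQ]
    refine Finset.sum_eq_zero fun c _ => ?_
    rw [iteZ_neg (fun h => hQ ((hiff c).1 h).1)]

lemma sum_update_condP (p : (∀ i, 𝒳 i) → ℝ) {S P : Set V} {u : V} (hS : u ∈ S)
    (hP : u ∉ P) (v : ∀ i, 𝒳 i) :
    (∑ c : 𝒳 u, condP p S P (Function.update v u c)) = condP p (S \ {u}) P v := by
  unfold condP
  have hden : ∀ c : 𝒳 u, marginal p P (Function.update v u c) = marginal p P v := by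
    intro c
    refine marginal_congr p fun i hi => ?_
    exact Function.update_of_ne (fun e => hP (by rw [← e]; exact hi)) c v
  calc (∑ c : 𝒳 u, marginal p (S ∪ P) (Function.update v u c) /
          marginal p P (Function.update v u c))
      = ∑ c : 𝒳 u, marginal p (S ∪ P) (Function.update v u c) / marginal p P v := by
        exact Finset.sum_congr rfl fun c _ => by rw [hden c]
    _ = (∑ c : 𝒳 u, marginal p (S ∪ P) (Function.update v u c)) / marginal p P v := by
        rw [Finset.sum_div]
    _ = marginal p ((S ∪ P) \ {u}) v / marginal p P v := by
        rw [sum_update_marginal p (Set.mem_union_left P hS) v]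
    _ = marginal p ((S \ {u}) ∪ P) v / marginal p P v := by
        have hset : (S ∪ P) \ {u} = (S \ {u}) ∪ P := by
          ext x
          simp only [Set.mem_diff, Set.mem_union, Set.mem_singleton_iff]
          constructor
          · rintro ⟨(hx | hx), hxu⟩
            · exact Or.inl ⟨hx, hxu⟩
            · exact Or.inr hx
          · rintro (⟨hx, hxu⟩ | hx)
            · exact ⟨Or.inl hx, hxu⟩
            · exact ⟨Or.inr hx, fun e => hP (by rw [← e]; exact hx)⟩
        rw [hset]

lemma sum_update_condP_one {p : (∀ i, 𝒳 i) → ℝ} (hp : IsPositivePMF p) {P : Set V} {u : V}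
    (hP : u ∉ P) (v : ∀ i, 𝒳 i) :
    (∑ c : 𝒳 u, condP p {u} P (Function.update v u c)) = 1 := by
  rw [sum_update_condP p (S := {u}) (Set.mem_singleton u) hP v, Set.diff_self]
  exact condP_empty hp P v

lemma condP_telescope {p : (∀ i, 𝒳 i) → ℝ} (hp : IsPositivePMF p) {C P : Set V} {m : V}
    (hm : m ∈ C) (v : ∀ i, 𝒳 i) :
    condP p C P v = condP p {m} ((C \ {m}) ∪ P) v * condP p (C \ {m}) P v := by
  unfold condP
  have h1 : ({m} : Set V) ∪ ((C \ {m}) ∪ P) = C ∪ P := by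
    ext x
    simp only [Set.mem_union, Set.mem_diff, Set.mem_singleton_iff]
    constructor
    · rintro (rfl | ⟨hC, -⟩ | hP)
      · exact Or.inl hm
      · exact Or.inl hC
      · exact Or.inr hP
    · rintro (hC | hP)
      · by_cases hxm : x = m
        · exact Or.inl hxm
        · exact Or.inr (Or.inl ⟨hC, hxm⟩)
      · exact Or.inr (Or.inr hP)
  rw [h1]
  have h2 : marginal p ((C \ {m}) ∪ P) v ≠ 0 := (marginal_pos hp _ v).ne'
  have h3 : marginal p P v ≠ 0 := (marginal_pos hp _ v).ne'
  field_simp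

lemma sum_iteZ_mul_const {U : Set V} (v : ∀ i, 𝒳 i) (g h : (∀ i, 𝒳 i) → ℝ)
    (hg : ∀ w, (∀ i, i ∉ U → w i = v i) → g w = g v) :
    (∑ w : ∀ i, 𝒳 i, iteZ (∀ i, i ∉ U → w i = v i) (g w * h w))
    = g v * ∑ w : ∀ i, 𝒳 i, iteZ (∀ i, i ∉ U → w i = v i) (h w) := by
  rw [Finset.mul_sum]
  refine Finset.sum_congr rfl fun w _ => ?_
  by_cases hw : ∀ i, i ∉ U → w i = v i
  · rw [iteZ_pos hw, iteZ_pos hw, hg w hw]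
  · rw [iteZ_neg hw, iteZ_neg hw, mul_zero]

end Aux2
section Aux3
set_option linter.unusedSectionVars false

variable {V : Type}

lemma exists_sink {α : Type} (r : α → α → Prop)
    (hacyc : ∀ a, ¬ Relation.TransGen r a a) :
    ∀ S : Finset α, S.Nonempty → ∃ m ∈ S, ∀ b ∈ S, ¬ r m b := by
  intro S
  induction S using Finset.strongInduction with
  | _ S ih =>
    intro hne
    obtain ⟨a, ha⟩ := hne
    by_cases hs : ∀ b ∈ S, ¬ r a b
    · exact ⟨a, ha, hs⟩
    · push_neg at hs
      obtain ⟨b, hb, hab⟩ := hs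
      classical
      set T := S.filter (fun c => Relation.TransGen r a c) with hT
      have hbT : b ∈ T := Finset.mem_filter.2 ⟨hb, Relation.TransGen.single hab⟩
      have hTS : T ⊂ S := by
        refine (Finset.ssubset_iff_of_subset (Finset.filter_subset _ _)).2 ?_
        exact ⟨a, ha, fun haT => hacyc a ((Finset.mem_filter.1 haT).2)⟩
      obtain ⟨m, hmT, hm⟩ := ih T hTS ⟨b, hbT⟩
      refine ⟨m, Finset.filter_subset _ _ hmT, fun c hc hmc => ?_⟩
      have hcT : c ∈ T := Finset.mem_filter.2 ⟨hc, ((Finset.mem_filter.1 hmT).2).tail hmc⟩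
      exact hm c hcT hmc

lemma rtg_to_fun {α : Type} {r : α → α → Prop} {c a : α} (h : Relation.ReflTransGen r c a) :
    ∃ n : ℕ, ∃ g : ℕ → α, g 0 = c ∧ g n = a ∧ ∀ i < n, r (g i) (g (i + 1)) := by
  induction h with
  | refl => exact ⟨0, fun _ => c, rfl, rfl, fun i hi => absurd hi (Nat.not_lt_zero i)⟩
  | @tail b b' _ hstep ih =>
    obtain ⟨n, g, h0, hn, hs⟩ := ih
    refine ⟨n + 1, fun i => if i ≤ n then g i else b', ?_, ?_, ?_⟩
    · simpa using h0
    · simp [Nat.lt_irrefl]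
    · intro i hi
      rcases Nat.lt_or_ge i n with h | h
      · simpa [Nat.le_of_lt h, Nat.succ_le_of_lt h] using hs i h
      · have hin : i = n := by omega
        subst hin
        simpa [Nat.lt_irrefl, hn] using hstep

lemma no_dir_back (G : PDG V) (hSA : G.StrictlyAcyclic) {a c : V} (hd : G.dir a c)
    (hrt : Relation.ReflTransGen G.SStep c a) : False := by
  obtain ⟨n, g, h0, hn, hs⟩ := rtg_to_fun hrt
  have hca : c ≠ a := fun e => G.dir_irrefl a (by rw [← e] at hd ⊢; exact e ▸ hd)
  have hn1 : 1 ≤ n := by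
    rcases Nat.eq_zero_or_pos n with h | h
    · exact absurd (h0.symm.trans (h ▸ hn)) hca
    · exact h
  refine hSA ⟨n + 1, fun i => if i = 0 then a else g (i - 1), by omega, ?_, ?_, ?_⟩
  · simp [hn, (by omega : ¬ n + 1 = 0), (by omega : n + 1 - 1 = n)]
  · intro i hi
    rcases Nat.eq_zero_or_pos i with h | h
    · subst h
      simpa [h0, PDG.SStep] using Or.inl hd
    · have h1 : ¬ i = 0 := by omega
      have h2 : ¬ i + 1 = 0 := by omega
      simp only [if_neg h1, if_neg h2]
      rw [(by omega : i + 1 - 1 = i - 1 + 1)]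
      exact hs (i - 1) (by omega)
  · refine ⟨0, by omega, ?_⟩
    simpa [h0] using hd

lemma sc_sstep {G : PDG V} {a b : V} (h : G.sameChain a b) :
    Relation.ReflTransGen G.SStep a b :=
  Relation.ReflTransGen.mono (fun _ _ h => Or.inr h) _ _ h

lemma sameChain_symm {G : PDG V} {i j : V} (h : G.sameChain i j) : G.sameChain j i := by
  induction h with
  | refl => exact Relation.ReflTransGen.refl
  | tail _ hstep ih => exact Relation.ReflTransGen.head (G.undir_symm _ _ hstep) ih

lemma sameChain_trans {G : PDG V} {i j k : V} (h1 : G.sameChain i j) (h2 : G.sameChain j k) :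
    G.sameChain i k := Relation.ReflTransGen.trans h1 h2

lemma mem_chainComp_self (G : PDG V) (i : V) : i ∈ G.chainComp i :=
  Relation.ReflTransGen.refl

lemma chainComp_eq_of {G : PDG V} {i j : V} (h : G.sameChain i j) :
    G.chainComp i = G.chainComp j := by
  ext k
  exact ⟨fun hk => sameChain_trans (sameChain_symm h) hk, fun hk => sameChain_trans h hk⟩

lemma dir_all_comp {G : PDG V} (hSA : G.StrictlyAcyclic)
    (hMeek : ∀ I J K : V, G.dir I J → G.undir J K → G.Adj I K)
    {k c i : V} (hd : G.dir k c) (hc : G.sameChain c i) : G.dir k i := by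
  induction hc with
  | refl => exact hd
  | @tail b b' hcb hstep ih =>
    rcases hMeek k b b' ih hstep with h | h | h
    · exact h
    · exfalso
      refine no_dir_back G hSA h ?_
      have s1 : Relation.ReflTransGen G.SStep k b := Relation.ReflTransGen.single (Or.inl ih)
      exact s1.tail (Or.inr hstep)
    · exfalso
      refine no_dir_back G hSA hd ?_
      refine Relation.ReflTransGen.tail ?_ (Or.inr (G.undir_symm _ _ h))
      exact Relation.ReflTransGen.tail (sc_sstep hcb) (Or.inr hstep)

lemma Pa_eq_comp {G : PDG V} (hSA : G.StrictlyAcyclic)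
    (hMeek : ∀ I J K : V, G.dir I J → G.undir J K → G.Adj I K)
    {S : Set V} {i : V} (hS : S ⊆ G.chainComp i) (hne : S.Nonempty) :
    G.Pa S = G.Pa (G.chainComp i) := by
  ext k
  constructor
  · rintro ⟨d, hd, hkd⟩
    exact ⟨d, hS hd, hkd⟩
  · rintro ⟨d, hd, hkd⟩
    obtain ⟨s, hs⟩ := hne
    exact ⟨s, hs, dir_all_comp hSA hMeek hkd (sameChain_trans (sameChain_symm hd) (hS hs))⟩

lemma Pa_comp_not_mem {G : PDG V} (hSA : G.StrictlyAcyclic) {i k : V}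
    (hk : k ∈ G.Pa (G.chainComp i)) : k ∉ G.chainComp i := by
  rintro hm
  obtain ⟨d, hd, hkd⟩ := hk
  exact no_dir_back G hSA hkd (sc_sstep (sameChain_trans (sameChain_symm hd) hm))

lemma pa_comp_acyclic {G : PDG V} (hSA : G.StrictlyAcyclic) :
    ∀ a : V, ¬ Relation.TransGen (fun x y : V => x ∈ G.Pa (G.chainComp y)) a a := by
  intro a ha
  have key : ∀ {x y : V}, Relation.TransGen (fun x y : V => x ∈ G.Pa (G.chainComp y)) x y →
      ∃ c, G.dir x c ∧ Relation.ReflTransGen G.SStep c y := by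
    intro x y h
    induction h with
    | single h =>
      obtain ⟨d, hd, hxd⟩ := h
      exact ⟨d, hxd, sc_sstep (sameChain_symm hd)⟩
    | @tail b y' _ hstep ih =>
      obtain ⟨c, hxc, hcb⟩ := ih
      obtain ⟨d, hd, hbd⟩ := hstep
      refine ⟨c, hxc, Relation.ReflTransGen.trans hcb ?_⟩
      exact Relation.ReflTransGen.head (Or.inl hbd) (sc_sstep (sameChain_symm hd))
  obtain ⟨c, hac, hca⟩ := key ha
  exact no_dir_back G hSA hac hca

lemma dag_no_trans_loop {D : PDG V} (hD : D.IsDAG) :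
    ∀ a, ¬ Relation.TransGen (Relation.TransGen D.dir) a a := by
  intro a h
  rw [Relation.transGen_idem] at h
  exact hD.2 a h

lemma no_X_undir_walk (G : PDG V) {X Y : Set V} (hXY : Disjoint X Y)
    (hpath : ¬ G.HasProperUndirStartPath X Y)
    {x u : V} (hx : x ∈ X) (hu : u ∉ X) (hxu : G.undir x u)
    {n : ℕ} {g : ℕ → V} (h0 : g 0 = u) (hY : g n ∈ Y) (hX : ∀ i ≤ n, g i ∉ X)
    (hs : ∀ i < n, G.SStep (g i) (g (i + 1))) : False := by
  classical
  set Q : ℕ → Prop := fun m => ∃ f : ℕ → V, f 0 = x ∧ f m ∈ Y ∧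
    (∀ i, 1 ≤ i → i ≤ m → f i ∉ X) ∧ (∀ i < m, G.SStep (f i) (f (i + 1))) ∧
    G.undir (f 0) (f 1) ∧ 1 ≤ m with hQ
  have hQex : Q (n + 1) := by
    refine ⟨fun i => if i = 0 then x else g (i - 1), rfl, ?_, ?_, ?_, ?_, by omega⟩
    · simpa [(by omega : ¬ n + 1 = 0)] using hY
    · intro i h1 h2
      simp only [if_neg (by omega : ¬ i = 0)]
      exact hX (i - 1) (by omega)
    · intro i hi
      rcases Nat.eq_zero_or_pos i with h | h
      · subst h
        simpa [h0, PDG.SStep] using Or.inr hxu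
      · simp only [if_neg (by omega : ¬ i = 0), if_neg (by omega : ¬ i + 1 = 0)]
        rw [(by omega : i + 1 - 1 = i - 1 + 1)]
        exact hs (i - 1) (by omega)
    · simpa [h0] using hxu
  have hex : ∃ m, Q m := ⟨n + 1, hQex⟩
  set m := Nat.find hex with hm
  obtain ⟨f, hf0, hfY, hfX, hfs, hfu, hm1⟩ : Q m := Nat.find_spec hex
  -- minimal walk is injective
  have cut : ∀ i j, 1 ≤ i → i < j → j ≤ m → f i = f j → False := by
    intro i j h1 hij hjm heq
    have hQ' : Q (m - (j - i)) := by
      refine ⟨fun k => if k ≤ i then f k else f (k + (j - i)), ?_, ?_, ?_, ?_, ?_, by omega⟩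
      · simpa using hf0
      · beta_reduce
        by_cases hc : m - (j - i) ≤ i
        · have hmi : m - (j - i) = i := le_antisymm hc (by omega)
          rw [if_pos hc, hmi, heq]
          have hjm' : j = m := by omega
          rw [hjm']
          exact hfY
        · rw [if_neg hc, (by omega : m - (j - i) + (j - i) = m)]
          exact hfY
      · intro k hk1 hk2
        beta_reduce
        by_cases hc : k ≤ i
        · rw [if_pos hc]
          exact hfX k hk1 (by omega)
        · rw [if_neg hc]
          exact hfX _ (by omega) (by omega)
      · intro k hk
        beta_reduce
        by_cases hc : k ≤ i
        · by_cases hc2 : k < i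
          · rw [if_pos hc, if_pos (by omega : k + 1 ≤ i)]
            exact hfs k (by omega)
          · have hki : k = i := by omega
            rw [if_pos hc, if_neg (by omega : ¬ k + 1 ≤ i), hki, heq,
              (by omega : i + 1 + (j - i) = j + 1)]
            exact hfs j (by omega)
        · rw [if_neg hc, if_neg (by omega : ¬ k + 1 ≤ i),
            (by omega : k + 1 + (j - i) = k + (j - i) + 1)]
          exact hfs _ (by omega)
      · beta_reduce
        rw [if_pos (Nat.zero_le i), if_pos (by omega : 1 ≤ i)]
        exact hfu
    have hlt : m - (j - i) < m := by omega
    exact Nat.find_min hex hlt hQ'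
  have hinj : ∀ i ≤ m, ∀ j ≤ m, f i = f j → i = j := by
    intro i hi j hj heq
    by_contra hne
    rcases lt_trichotomy i j with hlt | he | hgt
    · rcases Nat.eq_zero_or_pos i with h | h
      · subst h
        exact hfX j (by omega) hj (by rw [← heq, hf0]; exact hx)
      · exact absurd (cut i j h hlt hj heq) not_false
    · exact hne he
    · rcases Nat.eq_zero_or_pos j with h | h
      · subst h
        exact hfX i (by omega) hi (by rw [heq, hf0]; exact hx)
      · exact absurd (cut j i h hgt hi heq.symm) not_false
  exact hpath ⟨m, f, hm1, hinj, hf0 ▸ hx, hfY, hfs, hfX, hfu⟩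

end Aux3
section Aux4
set_option linter.unusedSectionVars false

variable {V : Type} [Fintype V] [DecidableEq V] {𝒳 : V → Type} [∀ i, Fintype (𝒳 i)]
  [∀ i, Nonempty (𝒳 i)]

lemma engine (v : ∀ i, 𝒳 i) (f : V → (∀ i, 𝒳 i) → ℝ) (dep : V → Set V)
    (hdep : ∀ j w w', (∀ i ∈ dep j, w i = w' i) → f j w = f j w') :
    ∀ (W : Finset V) (U : Set V) (F : Finset V), (↑W : Set V) ⊆ U → W ⊆ F →
    (∀ u ∈ W, ∀ w : ∀ i, 𝒳 i, (∑ c : 𝒳 u, f u (Function.update w u c)) = 1) →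
    (∀ W' ⊆ W, W'.Nonempty → ∃ u ∈ W', ∀ j ∈ F \ (W \ W'), j ≠ u → u ∉ dep j) →
    (∑ w : ∀ i, 𝒳 i, iteZ (∀ i, i ∉ U → w i = v i) (∏ j ∈ F, f j w))
    = ∑ w : ∀ i, 𝒳 i, iteZ (∀ i, i ∉ U \ ↑W → w i = v i) (∏ j ∈ F \ W, f j w) := by
  intro W
  induction W using Finset.strongInduction with
  | _ W ih =>
    intro U F hWU hWF hone hord
    rcases Finset.eq_empty_or_nonempty W with rfl | hne
    · refine sum_iteZ_congr (fun w => ?_) (fun w _ => ?_)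
      · rw [Finset.coe_empty, Set.diff_empty]
      · rw [Finset.sdiff_empty]
    · obtain ⟨u, huW, hu⟩ := hord W (le_refl W) hne
      have huW' : ∀ j, j ∈ F → j ≠ u → u ∉ dep j := by
        intro j hj hju
        refine hu j ?_ hju
        rw [Finset.sdiff_self]
        simpa using hj
      have huU : u ∈ U := hWU (by exact_mod_cast huW)
      have hstep : ∀ w : ∀ i, 𝒳 i,
          (∑ c : 𝒳 u, ∏ j ∈ F, f j (Function.update w u c)) = ∏ j ∈ F.erase u, f j w := by
        intro w
        have hsplit : ∀ c : 𝒳 u, (∏ j ∈ F, f j (Function.update w u c))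
            = f u (Function.update w u c) * ∏ j ∈ F.erase u, f j w := by
          intro c
          rw [← Finset.mul_prod_erase F _ (hWF huW)]
          congr 1
          refine Finset.prod_congr rfl fun j hj => ?_
          have hju : j ≠ u := Finset.ne_of_mem_erase hj
          refine hdep j _ _ (fun i hi => ?_)
          have hiu : i ≠ u := fun e => huW' j (Finset.mem_of_mem_erase hj) hju (e ▸ hi)
          exact Function.update_of_ne hiu c w
        rw [Finset.sum_congr rfl fun c _ => hsplit c, ← Finset.sum_mul, hone u huW w, one_mul]
      have s1 : (↑(W.erase u) : Set V) ⊆ U \ {u} := by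
        rw [Finset.coe_erase]
        exact fun x hx => ⟨hWU hx.1, hx.2⟩
      have s2 : W.erase u ⊆ F.erase u := Finset.erase_subset_erase u hWF
      have s3 : ∀ u' ∈ W.erase u, ∀ w : ∀ i, 𝒳 i,
          (∑ c : 𝒳 u', f u' (Function.update w u' c)) = 1 :=
        fun u' hu' w => hone u' (Finset.mem_of_mem_erase hu') w
      have s4 : ∀ W' ⊆ W.erase u, W'.Nonempty →
          ∃ u' ∈ W', ∀ j ∈ (F.erase u) \ ((W.erase u) \ W'), j ≠ u' → u' ∉ dep j := by
        intro W' hW' hne'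
        obtain ⟨u', hu'W, hu'⟩ := hord W' (hW'.trans (Finset.erase_subset u W)) hne'
        refine ⟨u', hu'W, fun j hj hju => ?_⟩
        refine hu' j ?_ hju
        rw [Finset.mem_sdiff] at hj ⊢
        refine ⟨Finset.mem_of_mem_erase hj.1, fun hjWW' => ?_⟩
        rw [Finset.mem_sdiff] at hjWW'
        refine hj.2 ?_
        rw [Finset.mem_sdiff, Finset.mem_erase]
        have hjneu : j ≠ u := (Finset.mem_erase.1 hj.1).1
        exact ⟨⟨hjneu, hjWW'.1⟩, hjWW'.2⟩
      have hset1 : (U \ {u}) \ ↑(W.erase u) = U \ ↑W := by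
        rw [Finset.coe_erase]
        ext x
        simp only [Set.mem_diff, Set.mem_singleton_iff, Finset.mem_coe]
        constructor
        · rintro ⟨⟨hxU, hxu⟩, hx2⟩
          exact ⟨hxU, fun hxW => hx2 ⟨hxW, hxu⟩⟩
        · rintro ⟨hxU, hxW⟩
          exact ⟨⟨hxU, fun e => hxW (e ▸ huW)⟩, fun h => hxW h.1⟩
      have hset2 : F.erase u \ W.erase u = F \ W := by
        ext x
        simp only [Finset.mem_sdiff, Finset.mem_erase]
        constructor
        · rintro ⟨⟨hxu, hxF⟩, h2⟩
          exact ⟨hxF, fun hxW => h2 ⟨hxu, hxW⟩⟩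
        · rintro ⟨hxF, hxW⟩
          exact ⟨⟨fun e => hxW (e ▸ huW), hxF⟩, fun h => hxW h.2⟩
      calc (∑ w : ∀ i, 𝒳 i, iteZ (∀ i, i ∉ U → w i = v i) (∏ j ∈ F, f j w))
          = ∑ w : ∀ i, 𝒳 i, iteZ (∀ i, i ∉ U \ {u} → w i = v i)
              (∑ c : 𝒳 u, ∏ j ∈ F, f j (Function.update w u c)) :=
            sum_free_update huU v _
        _ = ∑ w : ∀ i, 𝒳 i, iteZ (∀ i, i ∉ U \ {u} → w i = v i)
              (∏ j ∈ F.erase u, f j w) :=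
            sum_iteZ_congr (fun w => Iff.rfl) (fun w _ => hstep w)
        _ = ∑ w : ∀ i, 𝒳 i, iteZ (∀ i, i ∉ (U \ {u}) \ ↑(W.erase u) → w i = v i)
              (∏ j ∈ (F.erase u) \ (W.erase u), f j w) :=
            ih (W.erase u) (Finset.erase_ssubset huW) (U \ {u}) (F.erase u) s1 s2 s3 s4
        _ = ∑ w : ∀ i, 𝒳 i, iteZ (∀ i, i ∉ U \ ↑W → w i = v i) (∏ j ∈ F \ W, f j w) :=
            sum_iteZ_congr (fun w => by rw [hset1]) (fun w _ => by rw [hset2])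

lemma marginal_sub_ancestral {p : (∀ i, 𝒳 i) → ℝ} (hp : IsPositivePMF p) {D : PDG V}
    (hD : D.IsDAG) (hfa : FactorizesDAG p D) {T R : Set V}
    (hanc : ∀ i ∈ T, ∀ k, D.dir k i → k ∈ T) (hRT : R ⊆ T) (w : ∀ i, 𝒳 i) :
    marginal p R w = ∑ w' : ∀ i, 𝒳 i, iteZ (∀ i, i ∉ T \ R → w' i = w i)
      (∏ j ∈ Finset.univ.filter (fun j => j ∈ T), condP p {j} (D.Pa {j}) w') := by
  classical
  have h0 : marginal p R w = ∑ w' : ∀ i, 𝒳 i, iteZ (∀ i, i ∉ Rᶜ → w' i = w i)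
      (∏ j ∈ (Finset.univ : Finset V), condP p {j} (D.Pa {j}) w') := by
    rw [marginal_eq_iteZ]
    refine sum_iteZ_congr (fun w' => ?_) (fun w' _ => ?_)
    · constructor
      · intro h i hi
        exact h i (by simpa using hi)
      · intro h i hi
        exact h i (by simpa using hi)
    · exact hfa w'
  have harg1 : (↑(Finset.univ.filter (fun j => j ∉ T)) : Set V) ⊆ Rᶜ := by
    intro x hx
    simp only [Finset.coe_filter, Finset.mem_univ, true_and, Set.mem_setOf_eq] at hx
    exact fun hxR => hx (hRT hxR)
  have harg2 : ∀ u ∈ Finset.univ.filter (fun j => j ∉ T), ∀ w' : ∀ i, 𝒳 i,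
      (∑ c : 𝒳 u, condP p {u} (D.Pa {u}) (Function.update w' u c)) = 1 := by
    intro u hu' w'
    refine sum_update_condP_one hp (fun hmem => ?_) w'
    obtain ⟨d, hd, hdir⟩ := hmem
    rw [Set.mem_singleton_iff] at hd
    exact D.dir_irrefl u (hd ▸ hdir)
  have harg3 : ∀ W' ⊆ Finset.univ.filter (fun j => j ∉ T), W'.Nonempty →
      ∃ u ∈ W', ∀ j ∈ Finset.univ \ (Finset.univ.filter (fun j => j ∉ T) \ W'), j ≠ u →
        u ∉ ({j} : Set V) ∪ D.Pa {j} := by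
    intro W' hW' hne'
    obtain ⟨u, huW', hsink⟩ := exists_sink D.dir hD.2 W' hne'
    refine ⟨u, huW', fun j hj hju hudep => ?_⟩
    rcases hudep with hudep | hudep
    · rw [Set.mem_singleton_iff] at hudep
      exact hju hudep.symm
    · obtain ⟨d, hd, hdir⟩ := hudep
      rw [Set.mem_singleton_iff] at hd
      rw [hd] at hdir
      rw [Finset.mem_sdiff] at hj
      by_cases hjW' : j ∈ W'
      · exact hsink j hjW' hdir
      · have hjW : j ∉ Finset.univ.filter (fun j => j ∉ T) := fun h =>
          hj.2 (Finset.mem_sdiff.2 ⟨h, hjW'⟩)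
        have hjT : j ∈ T := by
          by_contra hjT
          exact hjW (Finset.mem_filter.2 ⟨Finset.mem_univ j, hjT⟩)
        have huT : u ∈ T := hanc j hjT u hdir
        have := Finset.mem_filter.1 (hW' huW')
        exact this.2 huT
  have heng := engine w (fun j => condP p {j} (D.Pa {j})) (fun j => ({j} : Set V) ∪ D.Pa {j})
    (fun j w1 w2 h => condP_congr p h)
    (Finset.univ.filter (fun j => j ∉ T)) Rᶜ Finset.univ harg1 (Finset.subset_univ _)
    harg2 harg3
  refine h0.trans (heng.trans ?_)
  have hseteq : Rᶜ \ ↑(Finset.univ.filter (fun j => j ∉ T)) = T \ R := by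
    ext x
    simp only [Set.mem_diff, Set.mem_compl_iff, Finset.coe_filter, Finset.mem_univ,
      true_and, Set.mem_setOf_eq, not_not, Finset.mem_coe]
    tauto
  have hfs : Finset.univ \ Finset.univ.filter (fun j => j ∉ T)
      = Finset.univ.filter (fun j => j ∈ T) := by
    ext j
    simp only [Finset.mem_sdiff, Finset.mem_filter, Finset.mem_univ, true_and, not_not]
  refine sum_iteZ_congr (fun w' => ?_) (fun w' _ => ?_)
  · rw [hseteq]
  · rw [hfs]

lemma local_markov {p : (∀ i, 𝒳 i) → ℝ} (hp : IsPositivePMF p) {D : PDG V}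
    (hD : D.IsDAG) (hfa : FactorizesDAG p D) {u : V} {S : Set V}
    (hPa : D.Pa {u} ⊆ S) (huS : u ∉ S)
    (hnd : ∀ s ∈ S, ¬ Relation.TransGen D.dir u s) (w : ∀ i, 𝒳 i) :
    condP p {u} S w = condP p {u} (D.Pa {u}) w := by
  classical
  set T : Set V := D.An ({u} ∪ S) with hT
  have hanc : ∀ i ∈ T, ∀ k, D.dir k i → k ∈ T := by
    rintro i ⟨d, hd, hrt⟩ k hk
    exact ⟨d, hd, Relation.ReflTransGen.head hk hrt⟩
  have hsub1 : {u} ∪ S ⊆ T := fun i hi => ⟨i, hi, Relation.ReflTransGen.refl⟩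
  have huT : u ∈ T := hsub1 (Or.inl rfl)
  have hnochild : ∀ j ∈ T, ¬ D.dir u j := by
    rintro j ⟨d, hd, hrt⟩ hdir
    rcases hd with hd | hd
    · rw [Set.mem_singleton_iff] at hd
      rw [hd] at hrt
      exact hD.2 u (Relation.TransGen.head' hdir hrt)
    · exact hnd d hd (Relation.TransGen.head' hdir hrt)
  set FT : Finset V := Finset.univ.filter (fun j => j ∈ T) with hFT
  have huFT : u ∈ FT := Finset.mem_filter.2 ⟨Finset.mem_univ u, huT⟩
  set Q : ℝ := ∑ w' : ∀ i, 𝒳 i, iteZ (∀ i, i ∉ T \ ({u} ∪ S) → w' i = w i)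
      (∏ j ∈ FT.erase u, condP p {j} (D.Pa {j}) w') with hQdef
  have h1 : marginal p ({u} ∪ S) w = condP p {u} (D.Pa {u}) w * Q := by
    have hither : ∀ w' : ∀ i, 𝒳 i, (∏ j ∈ FT, condP p {j} (D.Pa {j}) w')
        = condP p {u} (D.Pa {u}) w' * ∏ j ∈ FT.erase u, condP p {j} (D.Pa {j}) w' :=
      fun w' => (Finset.mul_prod_erase FT _ huFT).symm
    have e1 := marginal_sub_ancestral hp hD hfa hanc hsub1 w
    have e2 : (∑ w' : ∀ i, 𝒳 i, iteZ (∀ i, i ∉ T \ ({u} ∪ S) → w' i = w i)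
          (∏ j ∈ FT, condP p {j} (D.Pa {j}) w'))
        = ∑ w' : ∀ i, 𝒳 i, iteZ (∀ i, i ∉ T \ ({u} ∪ S) → w' i = w i)
          (condP p {u} (D.Pa {u}) w' * ∏ j ∈ FT.erase u, condP p {j} (D.Pa {j}) w') :=
      sum_iteZ_congr (fun w' => Iff.rfl) (fun w' _ => hither w')
    have e3 : (∑ w' : ∀ i, 𝒳 i, iteZ (∀ i, i ∉ T \ ({u} ∪ S) → w' i = w i)
          (condP p {u} (D.Pa {u}) w' * ∏ j ∈ FT.erase u, condP p {j} (D.Pa {j}) w'))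
        = condP p {u} (D.Pa {u}) w * Q := by
      refine sum_iteZ_mul_const w (fun w' => condP p {u} (D.Pa {u}) w')
        (fun w' => ∏ j ∈ FT.erase u, condP p {j} (D.Pa {j}) w') ?_
      intro w' hw'
      refine condP_congr p fun i hi => ?_
      refine hw' i (fun hmem => ?_)
      rcases hi with hi | hi
      · rw [Set.mem_singleton_iff] at hi
        exact hmem.2 (Or.inl (by rw [hi]; exact rfl))
      · exact hmem.2 (Or.inr (hPa hi))
    exact e1.trans (e2.trans e3)
  have h2 : marginal p S w = Q := by
    have e1 := marginal_sub_ancestral hp hD hfa hanc (fun i hi => hsub1 (Or.inr hi)) w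
    have huTS : u ∈ T \ S := ⟨huT, huS⟩
    have e2 : (∑ w' : ∀ i, 𝒳 i, iteZ (∀ i, i ∉ T \ S → w' i = w i)
          (∏ j ∈ FT, condP p {j} (D.Pa {j}) w'))
        = ∑ w' : ∀ i, 𝒳 i, iteZ (∀ i, i ∉ (T \ S) \ {u} → w' i = w i)
          (∑ c : 𝒳 u, ∏ j ∈ FT, condP p {j} (D.Pa {j}) (Function.update w' u c)) :=
      sum_free_update huTS w _
    have hstep : ∀ w' : ∀ i, 𝒳 i,
        (∑ c : 𝒳 u, ∏ j ∈ FT, condP p {j} (D.Pa {j}) (Function.update w' u c))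
        = ∏ j ∈ FT.erase u, condP p {j} (D.Pa {j}) w' := by
      intro w'
      have hsplit : ∀ c : 𝒳 u, (∏ j ∈ FT, condP p {j} (D.Pa {j}) (Function.update w' u c))
          = condP p {u} (D.Pa {u}) (Function.update w' u c) *
            ∏ j ∈ FT.erase u, condP p {j} (D.Pa {j}) w' := by
        intro c
        rw [← Finset.mul_prod_erase FT _ huFT]
        congr 1
        refine Finset.prod_congr rfl fun j hj => ?_
        have hju : j ≠ u := Finset.ne_of_mem_erase hj
        refine condP_congr p fun i hi => ?_
        have hiu : i ≠ u := by
          rintro rfl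
          rcases hi with hi | hi
          · rw [Set.mem_singleton_iff] at hi
            exact hju hi.symm
          · obtain ⟨d, hd, hdir⟩ := hi
            rw [Set.mem_singleton_iff] at hd
            rw [hd] at hdir
            have hjT : j ∈ T := (Finset.mem_filter.1 (Finset.mem_of_mem_erase hj)).2
            exact hnochild j hjT hdir
        exact Function.update_of_ne hiu c w'
      have hone : (∑ c : 𝒳 u, condP p {u} (D.Pa {u}) (Function.update w' u c)) = 1 := by
        refine sum_update_condP_one hp (fun hmem => ?_) w'
        obtain ⟨d, hd, hdir⟩ := hmem
        rw [Set.mem_singleton_iff] at hd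
        exact D.dir_irrefl u (hd ▸ hdir)
      rw [Finset.sum_congr rfl fun c _ => hsplit c, ← Finset.sum_mul, hone, one_mul]
    have e3 : (∑ w' : ∀ i, 𝒳 i, iteZ (∀ i, i ∉ (T \ S) \ {u} → w' i = w i)
          (∑ c : 𝒳 u, ∏ j ∈ FT, condP p {j} (D.Pa {j}) (Function.update w' u c)))
        = ∑ w' : ∀ i, 𝒳 i, iteZ (∀ i, i ∉ (T \ S) \ {u} → w' i = w i)
          (∏ j ∈ FT.erase u, condP p {j} (D.Pa {j}) w') :=
      sum_iteZ_congr (fun w' => Iff.rfl) (fun w' _ => hstep w')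
    have hseteq : (T \ S) \ {u} = T \ ({u} ∪ S) := by
      ext x
      simp only [Set.mem_diff, Set.mem_singleton_iff, Set.mem_union]
      tauto
    have e4 : (∑ w' : ∀ i, 𝒳 i, iteZ (∀ i, i ∉ (T \ S) \ {u} → w' i = w i)
          (∏ j ∈ FT.erase u, condP p {j} (D.Pa {j}) w')) = Q :=
      sum_iteZ_congr (fun w' => by rw [hseteq]) (fun w' _ => rfl)
    exact e1.trans (e2.trans (e3.trans e4))
  have hQpos : Q ≠ 0 := by
    rw [← h2]
    exact (marginal_pos hp S w).ne'
  have hfin : condP p {u} S w = (condP p {u} (D.Pa {u}) w * Q) / Q := by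
    show marginal p ({u} ∪ S) w / marginal p S w = _
    rw [h1, h2]
  rw [hfin, mul_div_assoc, div_self hQpos, mul_one]

end Aux4
section Aux5
set_option linter.unusedSectionVars false

variable {V : Type} [Fintype V] [DecidableEq V] {𝒳 : V → Type} [∀ i, Fintype (𝒳 i)]
  [∀ i, Nonempty (𝒳 i)]

lemma Pa_empty (G : PDG V) : G.Pa (∅ : Set V) = ∅ := by
  ext k
  simp [PDG.Pa]

lemma condP_empty_head {p : (∀ i, 𝒳 i) → ℝ} (hp : IsPositivePMF p) (P : Set V)
    (v : ∀ i, 𝒳 i) : condP p (∅ : Set V) P v = 1 := condP_empty hp P v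

lemma prod_comp {p : (∀ i, 𝒳 i) → ℝ} (hp : IsPositivePMF p) {D : PDG V} (hD : D.IsDAG)
    (hfa : FactorizesDAG p D) {τ P : Set V}
    (hPτ : ∀ k ∈ P, ∀ i ∈ τ, D.dir k i) (hPdisj : ∀ i ∈ τ, i ∉ P) (w : ∀ i, 𝒳 i) :
    ∀ C : Finset V, ↑C ⊆ τ → (∀ i ∈ C, D.Pa {i} ⊆ P ∪ ↑C) →
    (∏ i ∈ C, condP p {i} (D.Pa {i}) w) = condP p ↑C P w := by
  intro C
  induction C using Finset.strongInduction with
  | _ C ih =>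
    intro hCτ hclos
    rcases Finset.eq_empty_or_nonempty C with rfl | hne
    · rw [Finset.prod_empty, Finset.coe_empty, condP_empty hp]
    · obtain ⟨m, hmC, hsink⟩ :=
        exists_sink (Relation.TransGen D.dir) (dag_no_trans_loop hD) C hne
      have hmτ : m ∈ τ := hCτ hmC
      have hlm : condP p {m} ((↑C \ {m}) ∪ P) w = condP p {m} (D.Pa {m}) w := by
        refine local_markov hp hD hfa ?_ ?_ ?_ w
        · intro k hk
          have hkm : ¬ k = m := by
            intro e
            obtain ⟨d, hd, hdir⟩ := hk
            rw [Set.mem_singleton_iff] at hd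
            rw [e, hd] at hdir
            exact D.dir_irrefl m hdir
          rcases hclos m hmC hk with hkP | hkC
          · exact Or.inr hkP
          · exact Or.inl ⟨hkC, hkm⟩
        · rintro (⟨hC, hm⟩ | hP)
          · exact hm rfl
          · exact hPdisj m hmτ hP
        · intro s hs htg
          rcases hs with ⟨hsC, hsm⟩ | hsP
          · exact hsink s hsC htg
          · exact hD.2 m (htg.tail (hPτ s hsP m hmτ))
      have htel := condP_telescope hp (C := (↑C : Set V)) (P := P) (m := m)
        (by exact_mod_cast hmC) w
      rw [← Finset.mul_prod_erase C _ hmC, htel, ← hlm]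
      congr 1
      have hsub : (↑(C.erase m) : Set V) ⊆ τ := by
        rw [Finset.coe_erase]
        exact fun x hx => hCτ hx.1
      have hclos' : ∀ i ∈ C.erase m, D.Pa {i} ⊆ P ∪ ↑(C.erase m) := by
        intro i hi k hk
        rcases hclos i (Finset.mem_of_mem_erase hi) hk with hkP | hkC
        · exact Or.inl hkP
        · right
          rw [Finset.coe_erase]
          refine ⟨hkC, fun e => ?_⟩
          obtain ⟨d, hd, hdir⟩ := hk
          rw [Set.mem_singleton_iff] at hd
          rw [hd] at hdir
          rw [Set.mem_singleton_iff] at e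
          rw [e] at hdir
          exact hsink i (Finset.mem_of_mem_erase hi) (Relation.TransGen.single hdir)
      rw [ih (C.erase m) (Finset.erase_ssubset hmC) hsub hclos', Finset.coe_erase]

lemma mem_chainComponents {G : PDG V} {τ : Set V} :
    τ ∈ chainComponents G ↔ ∃ i, τ = G.chainComp i := by
  unfold chainComponents
  simp only [Finset.mem_image, Finset.mem_univ, true_and]
  constructor
  · rintro ⟨i, hi⟩; exact ⟨i, hi.symm⟩
  · rintro ⟨i, hi⟩; exact ⟨i, hi.symm⟩

lemma prod_group {G D : PDG V} (hSA : G.StrictlyAcyclic)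
    (hMeek : ∀ I J K : V, G.dir I J → G.undir J K → G.Adj I K)
    (hcl : D.InClass G) {p : (∀ i, 𝒳 i) → ℝ} (hp : IsPositivePMF p)
    (hfa : FactorizesDAG p D) {A' : Set V}
    (hA'cl : ∀ i ∈ A', ∀ k, D.dir k i → G.undir k i → k ∈ A') (w : ∀ i, 𝒳 i) :
    (∏ j ∈ Finset.univ.filter (fun j => j ∈ A'), condP p {j} (D.Pa {j}) w)
    = ∏ τ ∈ chainComponents G, condP p (A' ∩ τ) (G.Pa (A' ∩ τ)) w := by
  classical
  have hmaps : ∀ x ∈ Finset.univ.filter (fun j => j ∈ A'),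
      G.chainComp x ∈ chainComponents G := by
    intro x _
    exact mem_chainComponents.2 ⟨x, rfl⟩
  rw [← Finset.prod_fiberwise_of_maps_to hmaps (fun j => condP p {j} (D.Pa {j}) w)]
  refine Finset.prod_congr rfl fun τ hτ => ?_
  obtain ⟨i₀, rfl⟩ := mem_chainComponents.1 hτ
  have hfib : ((Finset.univ.filter (fun j => j ∈ A')).filter
      (fun x => G.chainComp x = G.chainComp i₀) : Finset V) =
      Finset.univ.filter (fun x => x ∈ A' ∩ G.chainComp i₀) := by
    ext x
    simp only [Finset.mem_filter, Finset.mem_univ, true_and, Set.mem_inter_iff]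
    constructor
    · rintro ⟨hx, he⟩
      exact ⟨hx, by rw [← he]; exact mem_chainComp_self G x⟩
    · rintro ⟨hx, hc⟩
      exact ⟨hx, (chainComp_eq_of hc).symm⟩
  rw [hfib]
  rcases Set.eq_empty_or_nonempty (A' ∩ G.chainComp i₀) with hemp | hne
  · have h1 : condP p (A' ∩ G.chainComp i₀) (G.Pa (A' ∩ G.chainComp i₀)) w = 1 := by
      rw [hemp]
      exact condP_empty hp _ w
    rw [h1]
    refine Finset.prod_eq_one fun x hx => ?_
    have hx2 := (Finset.mem_filter.1 hx).2
    rw [hemp] at hx2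
    exact absurd hx2 (Set.notMem_empty x)
  · -- nonempty component piece
    have hC : (↑(Finset.univ.filter (fun x => x ∈ A' ∩ G.chainComp i₀)) : Set V)
        = A' ∩ G.chainComp i₀ := by
      ext x
      simp only [Finset.coe_filter, Finset.mem_univ, true_and, Set.mem_setOf_eq]
    have hPa : G.Pa (A' ∩ G.chainComp i₀) = G.Pa (G.chainComp i₀) :=
      Pa_eq_comp hSA hMeek (Set.inter_subset_right) hne
    have hPτ : ∀ k ∈ G.Pa (G.chainComp i₀), ∀ i ∈ G.chainComp i₀, D.dir k i := by
      intro k hk i hi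
      obtain ⟨d, hd, hkd⟩ := hk
      exact hcl.2.2.1 k i (dir_all_comp hSA hMeek hkd
        (sameChain_trans (sameChain_symm hd) hi))
    have hPdisj : ∀ i ∈ G.chainComp i₀, i ∉ G.Pa (G.chainComp i₀) := by
      intro i hi hP
      exact Pa_comp_not_mem hSA hP hi
    have hclos : ∀ i ∈ Finset.univ.filter (fun x => x ∈ A' ∩ G.chainComp i₀),
        D.Pa {i} ⊆ G.Pa (G.chainComp i₀) ∪
          ↑(Finset.univ.filter (fun x => x ∈ A' ∩ G.chainComp i₀)) := by
      intro i hi k hk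
      rw [Finset.mem_filter] at hi
      have hiA : i ∈ A' := hi.2.1
      have hiτ : i ∈ G.chainComp i₀ := hi.2.2
      obtain ⟨d, hd, hdir⟩ := hk
      rw [Set.mem_singleton_iff] at hd
      rw [hd] at hdir
      -- D.dir k i; skeleton: G.dir k i ∨ G.dir i k ∨ G.undir k i
      have hadj : G.Adj k i := (hcl.2.1 k i).1 (Or.inl hdir)
      rcases hadj with hG | hG | hG
      · -- G-directed parent: common parent of the component
        left
        exact ⟨i, hiτ, hG⟩
      · -- G.dir i k contradicts D.dir k i
        exact absurd (hcl.2.2.1 i k hG) (D.not_dir_dir k i hdir)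
      · -- undirected: k in the same component and in A'
        right
        rw [hC]
        refine ⟨hA'cl i hiA k hdir hG, ?_⟩
        exact sameChain_trans hiτ (Relation.ReflTransGen.single (G.undir_symm k i hG))
    have := prod_comp hp hcl.1 hfa hPτ hPdisj w
      (Finset.univ.filter (fun x => x ∈ A' ∩ G.chainComp i₀))
      (by rw [hC]; exact Set.inter_subset_right) hclos
    rw [this, hC, hPa]

end Aux5
section Aux6
set_option linter.unusedSectionVars false

variable {V : Type} [Fintype V] [DecidableEq V] {𝒳 : V → Type} [∀ i, Fintype (𝒳 i)]
  [∀ i, Nonempty (𝒳 i)]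

lemma claim3 {G : PDG V} (hSA : G.StrictlyAcyclic)
    (hMeek : ∀ I J K : V, G.dir I J → G.undir J K → G.Adj I K)
    {p : (∀ i, 𝒳 i) → ℝ} (hp : IsPositivePMF p)
    {A A' B0 : Set V} (hAA' : A ⊆ A')
    (hnoAp : ∀ u ∈ A' \ A, ∀ d ∈ A, ¬ G.dir u d)
    (hB0 : ∀ u ∈ A' \ A, u ∉ B0) (v : ∀ i, 𝒳 i) :
    ∀ R : Finset V, ↑R ⊆ A' \ A →
    (∑ w : ∀ i, 𝒳 i, iteZ (∀ i, i ∉ B0 ∪ ↑R → w i = v i)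
      (∏ τ ∈ chainComponents G, condP p ((A ∪ ↑R) ∩ τ) (G.Pa (A' ∩ τ)) w))
    = ∑ w : ∀ i, 𝒳 i, iteZ (∀ i, i ∉ B0 → w i = v i)
      (∏ τ ∈ chainComponents G, condP p (A ∩ τ) (G.Pa (A' ∩ τ)) w) := by
  intro R
  induction R using Finset.strongInduction with
  | _ R ih =>
    intro hRsub
    rcases Finset.eq_empty_or_nonempty R with rfl | hne
    · refine sum_iteZ_congr (fun w => ?_) (fun w _ => ?_)
      · rw [Finset.coe_empty, Set.union_empty]
      · refine Finset.prod_congr rfl fun τ _ => ?_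
        rw [Finset.coe_empty, Set.union_empty]
    · obtain ⟨u, huR, hsink⟩ :=
        exists_sink (fun x y : V => x ∈ G.Pa (G.chainComp y)) (pa_comp_acyclic hSA) R hne
      have huAA : u ∈ A' \ A := hRsub huR
      have huA : u ∉ A := huAA.2
      have huU : u ∈ B0 ∪ ↑R := Or.inr (by exact_mod_cast huR)
      have hother : ∀ τ ∈ chainComponents G, τ ≠ G.chainComp u → ∀ (w : ∀ i, 𝒳 i)
          (c : 𝒳 u), condP p ((A ∪ ↑R) ∩ τ) (G.Pa (A' ∩ τ)) (Function.update w u c)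
          = condP p ((A ∪ ↑(R.erase u)) ∩ τ) (G.Pa (A' ∩ τ)) w := by
        intro τ hτ hτu w c
        obtain ⟨j, rfl⟩ := mem_chainComponents.1 hτ
        have huτ : u ∉ G.chainComp j := by
          intro hu
          exact hτu (chainComp_eq_of hu)
        have hseteq : (A ∪ ↑R) ∩ G.chainComp j = (A ∪ ↑(R.erase u)) ∩ G.chainComp j := by
          ext x
          rw [Finset.coe_erase]
          simp only [Set.mem_inter_iff, Set.mem_union, Set.mem_diff,
            Set.mem_singleton_iff, Finset.mem_coe]
          constructor
          · rintro ⟨hx1, hx2⟩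
            refine ⟨?_, hx2⟩
            rcases hx1 with h | h
            · exact Or.inl h
            · exact Or.inr ⟨h, fun e => huτ (e ▸ hx2)⟩
          · rintro ⟨hx1, hx2⟩
            refine ⟨?_, hx2⟩
            rcases hx1 with h | h
            · exact Or.inl h
            · exact Or.inr h.1
        rw [hseteq]
        rcases Set.eq_empty_or_nonempty ((A ∪ ↑(R.erase u)) ∩ G.chainComp j)
          with hemp | hne'
        · rw [hemp, condP_empty hp, condP_empty hp]
        · refine condP_congr p fun i hi => ?_
          have hiu : i ≠ u := by
            intro e
            rcases hi with hi | hi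
            · rw [e] at hi
              exact huτ hi.2
            · rw [e] at hi
              have hu_all : ∀ y ∈ G.chainComp j, G.dir u y := by
                obtain ⟨d, hd, hdir⟩ := hi
                intro y hy
                exact dir_all_comp hSA hMeek hdir
                  (sameChain_trans (sameChain_symm hd.2) hy)
              obtain ⟨x, hx1, hx2⟩ := hne'
              rcases hx1 with hxA | hxR
              · exact hnoAp u huAA x hxA (hu_all x hx2)
              · have hxR' : x ∈ R := Finset.mem_of_mem_erase (by exact_mod_cast hxR)
                have hτx : G.chainComp x = G.chainComp j := (chainComp_eq_of hx2).symm
                refine hsink x hxR' ?_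
                rw [hτx]
                exact ⟨x, hx2, hu_all x hx2⟩
          exact Function.update_of_ne hiu c w
      have hτu_mem : G.chainComp u ∈ chainComponents G := mem_chainComponents.2 ⟨u, rfl⟩
      have hheadu : u ∈ (A ∪ ↑R) ∩ G.chainComp u :=
        ⟨Or.inr (by exact_mod_cast huR), mem_chainComp_self G u⟩
      have hunotPa : u ∉ G.Pa (A' ∩ G.chainComp u) := by
        intro hu
        rcases Set.eq_empty_or_nonempty (A' ∩ G.chainComp u) with hemp | hne'
        · rw [hemp, Pa_empty] at hu
          exact hu
        · rw [Pa_eq_comp hSA hMeek Set.inter_subset_right hne'] at hu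
          exact Pa_comp_not_mem hSA hu (mem_chainComp_self G u)
      have hheaderase : ((A ∪ ↑R) ∩ G.chainComp u) \ {u}
          = (A ∪ ↑(R.erase u)) ∩ G.chainComp u := by
        ext x
        rw [Finset.coe_erase]
        simp only [Set.mem_diff, Set.mem_inter_iff, Set.mem_union,
          Set.mem_singleton_iff, Finset.mem_coe]
        constructor
        · rintro ⟨⟨h1, h2⟩, h3⟩
          refine ⟨?_, h2⟩
          rcases h1 with h | h
          · exact Or.inl h
          · exact Or.inr ⟨h, h3⟩
        · rintro ⟨h1, h2⟩
          rcases h1 with h | h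
          · exact ⟨⟨Or.inl h, h2⟩, fun e => huA (e ▸ h)⟩
          · exact ⟨⟨Or.inr h.1, h2⟩, h.2⟩
      have hstep3 : ∀ w : ∀ i, 𝒳 i,
          (∑ c : 𝒳 u, ∏ τ ∈ chainComponents G,
            condP p ((A ∪ ↑R) ∩ τ) (G.Pa (A' ∩ τ)) (Function.update w u c))
          = ∏ τ ∈ chainComponents G,
            condP p ((A ∪ ↑(R.erase u)) ∩ τ) (G.Pa (A' ∩ τ)) w := by
        intro w
        have hsplit : ∀ c : 𝒳 u, (∏ τ ∈ chainComponents G,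
              condP p ((A ∪ ↑R) ∩ τ) (G.Pa (A' ∩ τ)) (Function.update w u c))
            = condP p ((A ∪ ↑R) ∩ G.chainComp u) (G.Pa (A' ∩ G.chainComp u))
                (Function.update w u c) *
              ∏ τ ∈ (chainComponents G).erase (G.chainComp u),
                condP p ((A ∪ ↑(R.erase u)) ∩ τ) (G.Pa (A' ∩ τ)) w := by
          intro c
          rw [← Finset.mul_prod_erase _ _ hτu_mem]
          congr 1
          refine Finset.prod_congr rfl fun τ hτ => ?_
          exact hother τ (Finset.mem_of_mem_erase hτ) (Finset.ne_of_mem_erase hτ) w c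
        rw [Finset.sum_congr rfl fun c _ => hsplit c, ← Finset.sum_mul,
          sum_update_condP p hheadu hunotPa w, hheaderase]
        exact Finset.mul_prod_erase _
          (fun τ => condP p ((A ∪ ↑(R.erase u)) ∩ τ) (G.Pa (A' ∩ τ)) w) hτu_mem
      have hfree : (B0 ∪ ↑R) \ {u} = B0 ∪ ↑(R.erase u) := by
        ext x
        rw [Finset.coe_erase]
        simp only [Set.mem_diff, Set.mem_union, Set.mem_singleton_iff, Finset.mem_coe]
        constructor
        · rintro ⟨h1, h2⟩
          rcases h1 with h | h
          · exact Or.inl h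
          · exact Or.inr ⟨h, h2⟩
        · rintro (h | h)
          · exact ⟨Or.inl h, fun e => hB0 u huAA (e ▸ h)⟩
          · exact ⟨Or.inr h.1, h.2⟩
      calc (∑ w : ∀ i, 𝒳 i, iteZ (∀ i, i ∉ B0 ∪ ↑R → w i = v i)
            (∏ τ ∈ chainComponents G, condP p ((A ∪ ↑R) ∩ τ) (G.Pa (A' ∩ τ)) w))
          = ∑ w : ∀ i, 𝒳 i, iteZ (∀ i, i ∉ (B0 ∪ ↑R) \ {u} → w i = v i)
              (∑ c : 𝒳 u, ∏ τ ∈ chainComponents G,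
                condP p ((A ∪ ↑R) ∩ τ) (G.Pa (A' ∩ τ)) (Function.update w u c)) :=
            sum_free_update huU v _
        _ = ∑ w : ∀ i, 𝒳 i, iteZ (∀ i, i ∉ (B0 ∪ ↑R) \ {u} → w i = v i)
              (∏ τ ∈ chainComponents G,
                condP p ((A ∪ ↑(R.erase u)) ∩ τ) (G.Pa (A' ∩ τ)) w) :=
            sum_iteZ_congr (fun w => Iff.rfl) (fun w _ => hstep3 w)
        _ = ∑ w : ∀ i, 𝒳 i, iteZ (∀ i, i ∉ B0 ∪ ↑(R.erase u) → w i = v i)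
              (∏ τ ∈ chainComponents G,
                condP p ((A ∪ ↑(R.erase u)) ∩ τ) (G.Pa (A' ∩ τ)) w) :=
            sum_iteZ_congr (fun w => by rw [hfree]) (fun w _ => rfl)
        _ = ∑ w : ∀ i, 𝒳 i, iteZ (∀ i, i ∉ B0 → w i = v i)
              (∏ τ ∈ chainComponents G, condP p (A ∩ τ) (G.Pa (A' ∩ τ)) w) :=
            ih (R.erase u) (Finset.erase_ssubset huR)
              ((Finset.coe_erase u R) ▸ fun x hx => hRsub (Set.diff_subset hx))

end Aux6
section Aux7
set_option linter.unusedSectionVars false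

variable {V : Type}

/-- Existence of a semi-directed walk to `Y` avoiding `X` (including the start). -/
def XcW (G : PDG V) (X Y : Set V) (u : V) : Prop :=
  ∃ (n : ℕ) (g : ℕ → V), g 0 = u ∧ g n ∈ Y ∧ (∀ i ≤ n, g i ∉ X) ∧
    ∀ i < n, G.SStep (g i) (g (i + 1))

lemma XcW_cons {G : PDG V} {X Y : Set V} {a b : V} (hs : G.SStep a b) (ha : a ∉ X)
    (hb : XcW G X Y b) : XcW G X Y a := by
  obtain ⟨n, g, h0, hY, hX, hstep⟩ := hb
  refine ⟨n + 1, fun i => if i = 0 then a else g (i - 1), rfl, ?_, ?_, ?_⟩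
  · simpa [(by omega : ¬ n + 1 = 0)] using hY
  · intro i hi
    by_cases h : i = 0
    · simpa [h] using ha
    · simp only [if_neg h]
      exact hX (i - 1) (by omega)
  · intro i hi
    by_cases h : i = 0
    · subst h
      simpa [h0] using hs
    · simp only [if_neg h, if_neg (by omega : ¬ i + 1 = 0)]
      rw [(by omega : i + 1 - 1 = i - 1 + 1)]
      exact hstep (i - 1) (by omega)

lemma XcW_no_X {G : PDG V} {X Y : Set V} (hXY : Disjoint X Y)
    (hpath : ¬ G.HasProperUndirStartPath X Y) {x u : V} (hx : x ∈ X) (hu : u ∉ X)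
    (hxu : G.undir x u) (hw : XcW G X Y u) : False := by
  obtain ⟨n, g, h0, hY, hX, hstep⟩ := hw
  exact no_X_undir_walk G hXY hpath hx hu hxu h0 hY hX hstep

lemma chain_protect {G : PDG V} {X Y : Set V} (hXY : Disjoint X Y)
    (hpath : ¬ G.HasProperUndirStartPath X Y) :
    ∀ {j m : V}, G.sameChain j m → m ∉ X → XcW G X Y m → j ∉ X ∧ XcW G X Y j := by
  intro j m h
  induction h using Relation.ReflTransGen.head_induction_on with
  | refl => exact fun hm hw => ⟨hm, hw⟩
  | head hstep _ ih =>
    intro hm hw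
    obtain ⟨h1, h2⟩ := ih hm hw
    rename_i a c _
    have haX : a ∉ X := fun haX => XcW_no_X hXY hpath haX h1 hstep h2
    exact ⟨haX, XcW_cons (Or.inr hstep) haX h2⟩

end Aux7

/-- identifiability for SA-MPDAG-like graphs (Perković's theorem,
identifiability direction, discrete positive case). If there is no proper semi-directed
path from `X` to `Y` starting with an undirected edge, and `p` factorizes according to
every DAG in `[G] ≠ ∅`, then the `Y`-marginal of the truncated factorization is the same
for every `D ∈ [G]` and equals the identification formula `Σ_b ∏_j p(b_j | pa_G(B_j))`. -/
theorem stmt12 {V : Type} [Fintype V] [DecidableEq V] (G : PDG V)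
    (hSA : G.StrictlyAcyclic)
    (hMeek : ∀ I J K : V, G.dir I J → G.undir J K → G.Adj I K)
    (X Y : Set V) (hXY : Disjoint X Y)
    (hpath : ¬ G.HasProperUndirStartPath X Y)
    (𝒳 : V → Type) [∀ i, Fintype (𝒳 i)] [∀ i, Nonempty (𝒳 i)]
    (p : (∀ i, 𝒳 i) → ℝ) (hp : IsPositivePMF p)
    (hfact : ∀ D : PDG V, D.InClass G → FactorizesDAG p D)
    (hne : ∃ D : PDG V, D.InClass G) :
    ∀ D : PDG V, D.InClass G →
      ∀ v : ∀ i, 𝒳 i, truncMarg D p X Y v = gFormula G p X Y v := by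
  intro D hcl v
  classical
  have hD : D.IsDAG := hcl.1
  have hskel := hcl.2.1
  have hdirp := hcl.2.2.1
  have hfa : FactorizesDAG p D := hfact D hcl
  set A : Set V := (G.induce Xᶜ).An Y with hAdef
  set A' : Set V := (D.induce Xᶜ).An Y with hA'def
  have hYXc : Y ⊆ Xᶜ := fun y hy => Set.disjoint_right.1 hXY hy
  have hYA : Y ⊆ A := fun d hd => ⟨d, hd, Relation.ReflTransGen.refl⟩
  have hYA' : Y ⊆ A' := fun d hd => ⟨d, hd, Relation.ReflTransGen.refl⟩
  have hA'Xc : A' ⊆ Xᶜ := by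
    rintro i ⟨d, hd, hrt⟩
    rcases Relation.ReflTransGen.cases_head hrt with h | ⟨b, hstep, -⟩
    · rw [h]; exact hYXc hd
    · exact hstep.2.1
  have hAXc : A ⊆ Xᶜ := by
    rintro i ⟨d, hd, hrt⟩
    rcases Relation.ReflTransGen.cases_head hrt with h | ⟨b, hstep, -⟩
    · rw [h]; exact hYXc hd
    · exact hstep.2.1
  have hAA' : A ⊆ A' := by
    rintro i ⟨d, hd, hrt⟩
    exact ⟨d, hd, Relation.ReflTransGen.mono
      (fun a b h => ⟨hdirp a b h.1, h.2.1, h.2.2⟩) _ _ hrt⟩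
  have hA'clX : ∀ i ∈ A', ∀ k, D.dir k i → k ∉ X → k ∈ A' := by
    rintro i hi k hdir hkX
    obtain ⟨d, hd, hrt⟩ := hi
    exact ⟨d, hd, Relation.ReflTransGen.head ⟨hdir, hkX, hA'Xc ⟨d, hd, hrt⟩⟩ hrt⟩
  have hAclX : ∀ i ∈ A, ∀ k, G.dir k i → k ∉ X → k ∈ A := by
    rintro i hi k hdir hkX
    obtain ⟨d, hd, hrt⟩ := hi
    exact ⟨d, hd, Relation.ReflTransGen.head ⟨hdir, hkX, hAXc ⟨d, hd, hrt⟩⟩ hrt⟩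
  have hstepG : ∀ a b, (D.induce Xᶜ).dir a b → G.SStep a b := by
    rintro a b ⟨hdir, haX, hbX⟩
    rcases (hskel a b).1 (Or.inl hdir) with h | h | h
    · exact Or.inl h
    · exact absurd (hdirp b a h) (D.not_dir_dir a b hdir)
    · exact Or.inr h
  have hA'W : ∀ i ∈ A', XcW G X Y i := by
    rintro i ⟨d, hd, hrt⟩
    obtain ⟨n, g, h0, hn, hs⟩ := rtg_to_fun hrt
    refine ⟨n, g, h0, by rw [hn]; exact hd, ?_, fun k hk => hstepG _ _ (hs k hk)⟩
    intro k hk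
    rcases Nat.lt_or_ge k n with h | h
    · exact (hs k h).2.1
    · have hkn : k = n := by omega
      rw [hkn, hn]
      exact hYXc hd
  have hnoundX : ∀ k ∈ X, ∀ i ∈ A', ¬ G.undir k i := fun k hk i hi hun =>
    XcW_no_X hXY hpath hk (hA'Xc hi) hun (hA'W i hi)
  have hA'cl_undir : ∀ i ∈ A', ∀ k, D.dir k i → G.undir k i → k ∈ A' := by
    intro i hi k hdir hun
    by_cases hkX : k ∈ X
    · exact absurd (G.undir_symm k i hun) (fun h => hnoundX k hkX i hi (G.undir_symm i k h))
    · exact hA'clX i hi k hdir hkX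
  have hnoAp : ∀ u ∈ A' \ A, ∀ d ∈ A, ¬ G.dir u d := by
    intro u hu d hd hdir
    exact hu.2 (hAclX d hd u hdir (hA'Xc hu.1))
  -- Step I : engine elimination of non-ancestors
  set Ffin : Finset V := Finset.univ.filter (fun i => i ∉ X) with hFfin
  set W1 : Finset V := Finset.univ.filter (fun i => i ∉ X ∧ i ∉ A') with hW1
  have hmemW1 : ∀ x : V, x ∈ W1 ↔ (x ∉ X ∧ x ∉ A') := by
    intro x
    rw [hW1, Finset.mem_filter]
    exact ⟨fun h => h.2, fun h => ⟨Finset.mem_univ x, h⟩⟩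
  have hmemF : ∀ x : V, x ∈ Ffin ↔ x ∉ X := by
    intro x
    rw [hFfin, Finset.mem_filter]
    exact ⟨fun h => h.2, fun h => ⟨Finset.mem_univ x, h⟩⟩
  have hWU : (↑W1 : Set V) ⊆ (X ∪ Y)ᶜ := by
    intro x hx
    have hx' := (hmemW1 x).1 (Finset.mem_coe.1 hx)
    intro hmem
    rcases hmem with h | h
    · exact hx'.1 h
    · exact hx'.2 (hYA' h)
  have hWF : W1 ⊆ Ffin := by
    intro x hx
    exact (hmemF x).2 ((hmemW1 x).1 hx).1
  have honeW : ∀ u ∈ W1, ∀ w : ∀ i, 𝒳 i,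
      (∑ c : 𝒳 u, condP p {u} (D.Pa {u}) (Function.update w u c)) = 1 := by
    intro u _ w
    refine sum_update_condP_one hp (fun hmem => ?_) w
    obtain ⟨d, hd, hdir⟩ := hmem
    rw [Set.mem_singleton_iff] at hd
    exact D.dir_irrefl u (hd ▸ hdir)
  have hord : ∀ W' ⊆ W1, W'.Nonempty → ∃ u ∈ W', ∀ j ∈ Ffin \ (W1 \ W'), j ≠ u →
      u ∉ ({j} : Set V) ∪ D.Pa {j} := by
    intro W' hW' hne'
    obtain ⟨u, huW', hsink⟩ := exists_sink D.dir hD.2 W' hne'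
    refine ⟨u, huW', fun j hj hju hdep => ?_⟩
    rcases hdep with h | h
    · rw [Set.mem_singleton_iff] at h
      exact hju h.symm
    · obtain ⟨d, hd, hdir⟩ := h
      rw [Set.mem_singleton_iff] at hd
      rw [hd] at hdir
      rw [Finset.mem_sdiff] at hj
      by_cases hjW' : j ∈ W'
      · exact hsink j hjW' hdir
      · have hjW1 : j ∉ W1 := fun hmem => hj.2 (Finset.mem_sdiff.2 ⟨hmem, hjW'⟩)
        have hjX : j ∉ X := (hmemF j).1 hj.1
        have hjA' : j ∈ A' := by
          by_contra hc
          exact hjW1 ((hmemW1 j).2 ⟨hjX, hc⟩)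
        have huW1 := (hmemW1 u).1 (hW' huW')
        exact huW1.2 (hA'clX j hjA' u hdir huW1.1)
  have e1 : truncMarg D p X Y v = ∑ w : ∀ i, 𝒳 i,
      iteZ (∀ i, i ∉ (X ∪ Y)ᶜ → w i = v i) (∏ j ∈ Ffin, condP p {j} (D.Pa {j}) w) := by
    unfold truncMarg
    rw [← hFfin]
    refine Finset.sum_congr rfl fun w _ => ?_
    rw [ite_eq_iteZ]
    refine iteZ_congr ?_ (fun _ => rfl)
    constructor
    · intro h i hi
      exact h i (Set.notMem_compl_iff.1 hi)
    · intro h i hi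
      exact h i (Set.notMem_compl_iff.2 hi)
  have e2 := engine v (fun j => condP p {j} (D.Pa {j})) (fun j => ({j} : Set V) ∪ D.Pa {j})
    (fun j w1 w2 h => condP_congr p h) W1 ((X ∪ Y)ᶜ) Ffin hWU hWF honeW hord
  have hU1 : (X ∪ Y)ᶜ \ ↑W1 = A' \ Y := by
    ext x
    rw [Set.mem_diff, Set.mem_diff, Finset.mem_coe, hmemW1 x]
    constructor
    · rintro ⟨h1, h2⟩
      have hxX : x ∉ X := fun h => h1 (Or.inl h)
      have hxY : x ∉ Y := fun h => h1 (Or.inr h)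
      have hxA' : x ∈ A' := by
        by_contra hc
        exact h2 ⟨hxX, hc⟩
      exact ⟨hxA', hxY⟩
    · rintro ⟨h1, h2⟩
      have hxX : x ∉ X := hA'Xc h1
      exact ⟨fun hmem => hmem.elim hxX h2, fun hc => hc.2 h1⟩
  have hF1 : Ffin \ W1 = Finset.univ.filter (fun j => j ∈ A') := by
    ext x
    rw [Finset.mem_sdiff, hmemF x]
    constructor
    · rintro ⟨h1, h2⟩
      refine Finset.mem_filter.2 ⟨Finset.mem_univ x, ?_⟩
      by_contra hc
      exact h2 ((hmemW1 x).2 ⟨h1, hc⟩)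
    · intro h2
      have hxA' := (Finset.mem_filter.1 h2).2
      exact ⟨hA'Xc hxA', fun hc => ((hmemW1 x).1 hc).2 hxA'⟩
  have e3 : (∑ w : ∀ i, 𝒳 i, iteZ (∀ i, i ∉ (X ∪ Y)ᶜ \ ↑W1 → w i = v i)
        (∏ j ∈ Ffin \ W1, condP p {j} (D.Pa {j}) w))
      = ∑ w : ∀ i, 𝒳 i, iteZ (∀ i, i ∉ A' \ Y → w i = v i)
        (∏ j ∈ Finset.univ.filter (fun j => j ∈ A'), condP p {j} (D.Pa {j}) w) :=
    sum_iteZ_congr (fun w => by rw [hU1]) (fun w _ => by rw [hF1])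
  have e4 : (∑ w : ∀ i, 𝒳 i, iteZ (∀ i, i ∉ A' \ Y → w i = v i)
        (∏ j ∈ Finset.univ.filter (fun j => j ∈ A'), condP p {j} (D.Pa {j}) w))
      = ∑ w : ∀ i, 𝒳 i, iteZ (∀ i, i ∉ A' \ Y → w i = v i)
        (∏ τ ∈ chainComponents G, condP p (A' ∩ τ) (G.Pa (A' ∩ τ)) w) :=
    sum_iteZ_congr (fun w => Iff.rfl)
      (fun w _ => prod_group hSA hMeek hcl hp hfa hA'cl_undir w)
  set R0 : Finset V := Finset.univ.filter (fun i => i ∈ A' \ A) with hR0def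
  have hR0 : (↑R0 : Set V) = A' \ A := by
    rw [hR0def]
    ext x
    simp only [Finset.coe_filter, Finset.mem_univ, true_and, Set.mem_setOf_eq]
  have hAR0 : A ∪ ↑R0 = A' := by
    rw [hR0]
    exact Set.union_diff_cancel hAA'
  have hfree0 : (A \ Y) ∪ ↑R0 = A' \ Y := by
    rw [hR0]
    ext x
    simp only [Set.mem_union, Set.mem_diff]
    constructor
    · rintro (⟨h1, h2⟩ | ⟨h1, h2⟩)
      · exact ⟨hAA' h1, h2⟩
      · exact ⟨h1, fun hY => h2 (hYA hY)⟩
    · rintro ⟨h1, h2⟩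
      by_cases hA : x ∈ A
      · exact Or.inl ⟨hA, h2⟩
      · exact Or.inr ⟨h1, hA⟩
  have e5 : (∑ w : ∀ i, 𝒳 i, iteZ (∀ i, i ∉ A' \ Y → w i = v i)
        (∏ τ ∈ chainComponents G, condP p (A' ∩ τ) (G.Pa (A' ∩ τ)) w))
      = ∑ w : ∀ i, 𝒳 i, iteZ (∀ i, i ∉ (A \ Y) ∪ ↑R0 → w i = v i)
        (∏ τ ∈ chainComponents G, condP p ((A ∪ ↑R0) ∩ τ) (G.Pa (A' ∩ τ)) w) :=
    sum_iteZ_congr (fun w => by rw [hfree0])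
      (fun w _ => Finset.prod_congr rfl fun τ _ => by rw [hAR0])
  have hB0 : ∀ u ∈ A' \ A, u ∉ A \ Y := fun u hu hm => hu.2 hm.1
  have e6 := claim3 hSA hMeek hp hAA' hnoAp hB0 v R0 (by rw [hR0])
  have e7 : (∑ w : ∀ i, 𝒳 i, iteZ (∀ i, i ∉ A \ Y → w i = v i)
        (∏ τ ∈ chainComponents G, condP p (A ∩ τ) (G.Pa (A' ∩ τ)) w))
      = gFormula G p X Y v := by
    unfold gFormula cdProd
    rw [← hAdef]
    refine Finset.sum_congr rfl fun w _ => ?_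
    rw [ite_eq_iteZ]
    refine iteZ_congr Iff.rfl (fun _ => ?_)
    refine Finset.prod_congr rfl fun τ hτ => ?_
    obtain ⟨j, rfl⟩ := mem_chainComponents.1 hτ
    rcases Set.eq_empty_or_nonempty (A ∩ G.chainComp j) with hemp | hne'
    · rw [hemp, condP_empty hp, condP_empty hp]
    · have h1 : G.Pa (A' ∩ G.chainComp j) = G.Pa (G.chainComp j) :=
        Pa_eq_comp hSA hMeek Set.inter_subset_right
          (hne'.mono (Set.inter_subset_inter hAA' (le_refl _)))
      have h2 : G.Pa (A ∩ G.chainComp j) = G.Pa (G.chainComp j) :=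
        Pa_eq_comp hSA hMeek Set.inter_subset_right hne'
      rw [h1, h2]
  exact e1.trans (e2.trans (e3.trans (e4.trans (e5.trans (e6.trans e7)))))
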